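/- Let $h$ be supermultiplicative with $h(1)\le 1$ (or as needed for the induction), $w_1,\dots,w_n>0$, $W_n=\sum_{k=1}^n w_k$, and let $f:I\to(0,\infty)$ be $A_tG_h$-convex. Then $f\Big(\frac{1}{W_n}\sum_{k=1}^n w_k x_k\Big)\le \prod_{k=1}^n f(x_k)^{h(w_k/W_n)}$ for all $x_1,\dots,x_n\in I$, $n\ge 2$. -/

import Mathlib

open Real Set Finset

private lemma avg_mem (I : Set ℝ) (hIconv : Convex ℝ I) (n : ℕ) (w x : Fin n → ℝ)
    (hw : ∀ k, 0 < w k) (hx : ∀ k, x k ∈ I) (hn : 0 < n) :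
    (∑ k, w k * x k) / (∑ k, w k) ∈ I := by
  have hWpos : 0 < ∑ k, w k := Finset.sum_pos (fun k _ => hw k)
    (by simp [Finset.univ_nonempty_iff, Fin.pos_iff_nonempty.mp hn])
  have := hIconv.centerMass_mem (t := Finset.univ) (w := w) (z := x)
    (fun i _ => (hw i).le) (by simpa using hWpos) (fun i _ => hx i)
  simpa [Finset.centerMass, smul_eq_mul, div_eq_inv_mul] using this

private lemma jensen_aux (I : Set ℝ) (hIconv : Convex ℝ I)
    (h : ℝ → ℝ) (hpos : ∀ t ∈ Ioc (0:ℝ) 1, 0 < h t)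
    (hsuper : ∀ x ∈ Ioc (0:ℝ) 1, ∀ y ∈ Ioc (0:ℝ) 1, h x * h y ≤ h (x * y))
    (f : ℝ → ℝ) (hfge : ∀ x ∈ I, 1 ≤ f x)
    (hconv : ∀ a ∈ I, ∀ b ∈ I, ∀ t ∈ Icc (0:ℝ) 1,
      f (t * a + (1 - t) * b) ≤ f a ^ h t * f b ^ h (1 - t)) :
    ∀ (n : ℕ) (w x : Fin (n + 2) → ℝ), (∀ k, 0 < w k) → (∀ k, x k ∈ I) →
    f ((∑ k, w k * x k) / (∑ k, w k)) ≤
      ∏ k, f (x k) ^ h (w k / (∑ k, w k)) := by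
  intro n
  induction n with
  | zero =>
    intro w x hw hx
    have hW : 0 < w 0 + w 1 := by linarith [hw 0, hw 1]
    have ht : w 0 / (w 0 + w 1) ∈ Icc (0:ℝ) 1 := by
      constructor
      · exact div_nonneg (hw 0).le hW.le
      · rw [div_le_one hW]; linarith [hw 1]
    have key := hconv (x 0) (hx 0) (x 1) (hx 1) _ ht
    have h1 : (1 : ℝ) - w 0 / (w 0 + w 1) = w 1 / (w 0 + w 1) := by
      field_simp
      ring
    rw [h1] at key
    have h2 : w 0 / (w 0 + w 1) * x 0 + w 1 / (w 0 + w 1) * x 1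
        = (w 0 * x 0 + w 1 * x 1) / (w 0 + w 1) := by
      field_simp
    rw [h2] at key
    simpa [Fin.sum_univ_two, Fin.prod_univ_two] using key
  | succ m ih =>
    intro w x hw hx
    set w' : Fin (m + 2) → ℝ := fun k => w k.castSucc with hw'def
    set x' : Fin (m + 2) → ℝ := fun k => x k.castSucc with hx'def
    have hw' : ∀ k, 0 < w' k := fun k => hw _
    have hx' : ∀ k, x' k ∈ I := fun k => hx _
    set W' : ℝ := ∑ k, w' k with hW'def
    have hW' : 0 < W' := Finset.sum_pos (fun k _ => hw' k) univ_nonempty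
    set l : Fin (m + 3) := Fin.last _ with hl
    set W : ℝ := ∑ k, w k with hWdef
    have hWsplit : W = W' + w l := by
      rw [hWdef, Fin.sum_univ_castSucc]
    have hW : 0 < W := by rw [hWsplit]; have := hw l; linarith
    set ra : ℝ := (∑ k, w' k * x' k) / W' with hra
    have hraI : ra ∈ I := avg_mem I hIconv _ w' x' hw' hx' (by omega)
    set t : ℝ := w l / W with htd
    have ht1 : (1:ℝ) - t = W' / W := by
      rw [htd]
      field_simp
      linarith
    have htIcc : t ∈ Icc (0:ℝ) 1 := by
      constructor
      · exact div_nonneg (hw l).le hW.le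
      · rw [htd, div_le_one hW, hWsplit]; linarith
    have havg : (∑ k, w k * x k) / W = t * x l + (1 - t) * ra := by
      rw [ht1, htd, hra, Fin.sum_univ_castSucc]
      field_simp
      ring
    have key := hconv (x l) (hx l) ra hraI t htIcc
    rw [← havg] at key
    have hIH := ih w' x' hw' hx'
    rw [← hra, ← hW'def] at hIH
    have hW'W : W' / W ∈ Ioc (0:ℝ) 1 := by
      constructor
      · exact div_pos hW' hW
      · rw [div_le_one hW, hWsplit]; linarith [hw l]
    have h1t_pos : 0 < h (1 - t) := by rw [ht1]; exact hpos _ hW'W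
    have hfge1 : ∀ k : Fin (m + 2), (1:ℝ) ≤ f (x' k) := fun k => hfge _ (hx' k)
    have step2 : f ra ^ h (1 - t) ≤ ∏ k, f (x' k) ^ h (w' k / W) := by
      calc f ra ^ h (1 - t)
          ≤ (∏ k, f (x' k) ^ h (w' k / W')) ^ h (1 - t) := by
            apply Real.rpow_le_rpow (by linarith [hfge ra hraI]) hIH h1t_pos.le
        _ = ∏ k, (f (x' k) ^ h (w' k / W')) ^ h (1 - t) := by
            rw [← Real.finset_prod_rpow]
            intro k _
            exact Real.rpow_nonneg (by linarith [hfge1 k]) _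
        _ = ∏ k, f (x' k) ^ (h (w' k / W') * h (1 - t)) := by
            refine Finset.prod_congr rfl fun k _ => ?_
            rw [Real.rpow_mul (by linarith [hfge1 k])]
        _ ≤ ∏ k, f (x' k) ^ h (w' k / W) := by
            apply Finset.prod_le_prod
            · intro k _; exact Real.rpow_nonneg (by linarith [hfge1 k]) _
            · intro k _
              apply Real.rpow_le_rpow_of_exponent_le (hfge1 k)
              have hkW' : w' k / W' ∈ Ioc (0:ℝ) 1 := by
                constructor
                · exact div_pos (hw' k) hW'
                · rw [div_le_one hW']
                  exact Finset.single_le_sum (fun i _ => (hw' i).le) (mem_univ k)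
              have hs := hsuper _ hkW' _ hW'W
              rw [ht1]
              have heq : w' k / W' * (W' / W) = w' k / W := by
                field_simp
              rw [heq] at hs
              exact hs
    have step3 : f (x l) ^ h t * (f ra ^ h (1 - t)) ≤
        f (x l) ^ h t * ∏ k, f (x' k) ^ h (w' k / W) := by
      apply mul_le_mul_of_nonneg_left step2
        (Real.rpow_nonneg (by linarith [hfge _ (hx l)]) _)
    calc f ((∑ k, w k * x k) / W) ≤ f (x l) ^ h t * f ra ^ h (1 - t) := key
      _ ≤ f (x l) ^ h t * ∏ k, f (x' k) ^ h (w' k / W) := step3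
      _ = ∏ k, f (x k) ^ h (w k / W) := by
          rw [mul_comm]
          exact (Fin.prod_univ_castSucc
            (f := fun k : Fin (m + 3) => f (x k) ^ h (w k / W))).symm

theorem jensen_AtGh (I : Set ℝ) (hI : I ⊆ Ioi 0) (hIconv : Convex ℝ I)
    (h : ℝ → ℝ) (hpos : ∀ t ∈ Ioc (0:ℝ) 1, 0 < h t)
    (hsuper : ∀ x ∈ Ioc (0:ℝ) 1, ∀ y ∈ Ioc (0:ℝ) 1, h x * h y ≤ h (x * y))
    (f : ℝ → ℝ) (hfge : ∀ x ∈ I, 1 ≤ f x)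
    (hconv : ∀ a ∈ I, ∀ b ∈ I, ∀ t ∈ Icc (0:ℝ) 1,
      f (t * a + (1 - t) * b) ≤ f a ^ h t * f b ^ h (1 - t))
    (n : ℕ) (hn : 2 ≤ n) (w : Fin n → ℝ) (hw : ∀ k, 0 < w k)
    (x : Fin n → ℝ) (hx : ∀ k, x k ∈ I) :
    f ((∑ k, w k * x k) / (∑ k, w k)) ≤
      ∏ k, f (x k) ^ h (w k / (∑ k, w k)) := by
  obtain ⟨m, rfl⟩ : ∃ m, n = m + 2 := ⟨n - 2, by omega⟩
  exact jensen_aux I hIconv h hpos hsuper f hfge hconv m w x hw hx
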